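/- In a diagnosis setting that is a weak model of failure, if C ∈ 𝔠 is an actual cause with minimal contingency set Γ, then Δ := Γ ∪ {C} is a minimal diagnosis containing C, and Γ = Δ \ {C}. -/
import Mathlib


/-- A propositional formula, identified with the set of valuations satisfying it. -/
abbrev PropFormula (V : Type*) := (V → Bool) → Prop

/-- A set of formulas is consistent if some valuation satisfies all of them. -/
def Consistent {V : Type*} (T : Set (PropFormula V)) : Prop :=
  ∃ v : V → Bool, ∀ φ ∈ T, φ v

/-- A consistency-based diagnosis setting: a finite set of components, injective
abnormality variables, a model `M`, and an observation `Obs`. -/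
structure DiagSetting (V α : Type*) where
  comps : Finset α
  ab : α → V
  ab_inj : Function.Injective ab
  M : Set (PropFormula V)
  Obs : Set (PropFormula V)

variable {V α : Type*} [DecidableEq α]

/-- `Th(Δ) = M ∪ Obs ∪ { ab C is true : C ∈ Δ } ∪ { ab C is false : C ∈ 𝔠 \ Δ }`. -/
def DiagSetting.Th (S : DiagSetting V α) (Δ : Finset α) : Set (PropFormula V) :=
  S.M ∪ S.Obs ∪ {φ | ∃ C ∈ Δ, φ = fun v => v (S.ab C) = true}
    ∪ {φ | ∃ C ∈ S.comps \ Δ, φ = fun v => v (S.ab C) = false}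

/-- `Δ` is a diagnosis if `Δ ⊆ 𝔠` and `Th(Δ)` is consistent. -/
def DiagSetting.Diagnosis (S : DiagSetting V α) (Δ : Finset α) : Prop :=
  Δ ⊆ S.comps ∧ Consistent (S.Th Δ)

/-- A diagnosis is minimal if no proper subset of it is a diagnosis. -/
def DiagSetting.MinimalDiagnosis (S : DiagSetting V α) (Δ : Finset α) : Prop :=
  S.Diagnosis Δ ∧ ∀ Δ' ⊂ Δ, ¬ S.Diagnosis Δ'

/-- `C` is a counterfactual cause if `Th({C})` is consistent. -/
def DiagSetting.CounterfactualCause (S : DiagSetting V α) (C : α) : Prop :=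
  C ∈ S.comps ∧ Consistent (S.Th {C})

/-- `Γ ⊆ 𝔠 \ {C}` is a contingency set for `C ∈ 𝔠` if `Th(Γ)` is inconsistent
and `Th(Γ ∪ {C})` is consistent. -/
def DiagSetting.ContingencySet (S : DiagSetting V α) (C : α) (Γ : Finset α) : Prop :=
  C ∈ S.comps ∧ Γ ⊆ S.comps.erase C ∧ ¬ Consistent (S.Th Γ) ∧ Consistent (S.Th (insert C Γ))

/-- `C` is an actual cause if it has a contingency set. -/
def DiagSetting.ActualCause (S : DiagSetting V α) (C : α) : Prop :=
  ∃ Γ : Finset α, S.ContingencySet C Γ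

/-- A contingency set for `C` is minimal if no proper subset is a contingency set for `C`. -/
def DiagSetting.MinimalContingencySet (S : DiagSetting V α) (C : α) (Γ : Finset α) : Prop :=
  S.ContingencySet C Γ ∧ ∀ Γ' ⊂ Γ, ¬ S.ContingencySet C Γ'

/-- The truth value of `φ` does not depend on any abnormality variable `ab C'`, `C' ∈ 𝔠`. -/
def DiagSetting.IndepAb (S : DiagSetting V α) (φ : PropFormula V) : Prop :=
  ∀ v v' : V → Bool, (∀ x : V, (∀ C ∈ S.comps, S.ab C ≠ x) → v x = v' x) → (φ v ↔ φ v')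

/-- A weak model of failure: every formula of `M` is semantically of the form
`(ab C is true) ∨ ψ` with `ψ` independent of the abnormality variables, and every
formula of `Obs` is independent of the abnormality variables. -/
def DiagSetting.WeakModel (S : DiagSetting V α) : Prop :=
  (∀ φ ∈ S.M, ∃ C ∈ S.comps, ∃ ψ : PropFormula V,
      S.IndepAb ψ ∧ ∀ v, φ v ↔ (v (S.ab C) = true ∨ ψ v)) ∧
  (∀ φ ∈ S.Obs, S.IndepAb φ)

open Classical in
/-- Responsibility: `1/(1+|Γ|)` for a minimum-cardinality contingency set `Γ` for `C`
if `C` is an actual cause, and `0` otherwise. -/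
noncomputable def DiagSetting.Resp (S : DiagSetting V α) (C : α) : ℚ :=
  if S.ActualCause C then
    1 / (1 + ((sInf {n : ℕ | ∃ Γ : Finset α, S.ContingencySet C Γ ∧ Γ.card = n} : ℕ) : ℚ))
  else 0

open Classical in
lemma DiagSetting.consistent_mono (S : DiagSetting V α) (hW : S.WeakModel)
    {Δ Δ' : Finset α} (hsub : Δ ⊆ Δ') (hcomps : Δ' ⊆ S.comps)
    (hc : Consistent (S.Th Δ)) : Consistent (S.Th Δ') := by
  obtain ⟨v, hv⟩ := hc
  set w : V → Bool := fun x =>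
    if ∃ C ∈ Δ', S.ab C = x then true
    else if ∃ C ∈ S.comps, S.ab C = x then false else v x with hw
  have hagree : ∀ x : V, (∀ C ∈ S.comps, S.ab C ≠ x) → v x = w x := by
    intro x hx
    have h1 : ¬ ∃ C ∈ Δ', S.ab C = x := by
      rintro ⟨C, hC, rfl⟩; exact hx C (hcomps hC) rfl
    have h2 : ¬ ∃ C ∈ S.comps, S.ab C = x := by
      rintro ⟨C, hC, rfl⟩; exact hx C hC rfl
    simp [hw, h1, h2]
  refine ⟨w, ?_⟩
  intro φ hφ
  rcases hφ with ((hM | hObs) | hA) | hB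
  · obtain ⟨D, hD, ψ, hψ, hiff⟩ := hW.1 φ hM
    have hφv : φ v := hv φ (Or.inl (Or.inl (Or.inl hM)))
    rcases (hiff v).1 hφv with hab | hpsi
    · -- v (ab D) = true, so D ∈ Δ (else Th(Δ) forces it false)
      have hDΔ : D ∈ Δ := by
        by_contra hDn
        have : v (S.ab D) = false :=
          hv _ (Or.inr ⟨D, Finset.mem_sdiff.2 ⟨hD, hDn⟩, rfl⟩)
        simp [this] at hab
      have : w (S.ab D) = true := by
        have : ∃ C ∈ Δ', S.ab C = S.ab D := ⟨D, hsub hDΔ, rfl⟩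
        simp [hw, this]
      exact (hiff w).2 (Or.inl this)
    · exact (hiff w).2 (Or.inr ((hψ v w hagree).1 hpsi))
  · exact (hW.2 φ hObs v w hagree).1 (hv φ (Or.inl (Or.inl (Or.inr hObs))))
  · obtain ⟨D, hD, rfl⟩ := hA
    have : ∃ C ∈ Δ', S.ab C = S.ab D := ⟨D, hD, rfl⟩
    simp [hw, this]
  · obtain ⟨D, hD, rfl⟩ := hB
    rw [Finset.mem_sdiff] at hD
    have h1 : ¬ ∃ C ∈ Δ', S.ab C = S.ab D := by
      rintro ⟨C, hC, hCD⟩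
      exact hD.2 (S.ab_inj hCD ▸ hC)
    have h2 : ∃ C ∈ S.comps, S.ab C = S.ab D := ⟨D, hD.1, rfl⟩
    simp [hw, h1, h2]

/-- In a weak model of failure, if `C` is an actual cause with minimal
contingency set `Γ`, then `Δ := Γ ∪ {C}` is a minimal diagnosis containing `C`,
and `Γ = Δ \ {C}`. -/
theorem minimalContingencySet_insert_minimalDiagnosis
    (S : DiagSetting V α) (hW : S.WeakModel) (C : α) (Γ : Finset α)
    (h : S.MinimalContingencySet C Γ) :
    S.MinimalDiagnosis (insert C Γ) ∧ C ∈ insert C Γ ∧ Γ = (insert C Γ).erase C := by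
  classical
  obtain ⟨⟨hCc, hΓsub, hincons, hcons⟩, hmin⟩ := h
  have hCnΓ : C ∉ Γ := fun hC => (Finset.mem_erase.1 (hΓsub hC)).1 rfl
  have hΓc : Γ ⊆ S.comps := fun x hx => (Finset.mem_erase.1 (hΓsub hx)).2
  have hsubc : insert C Γ ⊆ S.comps := Finset.insert_subset hCc hΓc
  refine ⟨⟨⟨hsubc, hcons⟩, ?_⟩, Finset.mem_insert_self _ _,
    (Finset.erase_insert hCnΓ).symm⟩
  rintro Δ' hΔ' ⟨hΔ'c, hΔ'cons⟩
  by_cases hCΔ' : C ∈ Δ'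
  · -- Δ' = insert C (Δ'.erase C), with Δ'.erase C ⊂ Γ
    set Γ' := Δ'.erase C with hΓ'
    have hΓ'Γ : Γ' ⊂ Γ := by
      constructor
      · intro x hx
        rcases Finset.mem_erase.1 hx with ⟨hxC, hxΔ'⟩
        rcases Finset.mem_insert.1 (hΔ'.1 hxΔ') with rfl | h'
        · exact absurd rfl hxC
        · exact h'
      · intro hΓΓ'
        apply hΔ'.2
        intro x hx
        rcases Finset.mem_insert.1 hx with rfl | hxΓ
        · exact hCΔ'
        · exact (Finset.mem_erase.1 (hΓΓ' hxΓ)).2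
    have hΓ'sub : Γ' ⊆ S.comps.erase C := fun x hx =>
      Finset.mem_erase.2 ⟨(Finset.mem_erase.1 hx).1, hΔ'c (Finset.mem_erase.1 hx).2⟩
    have hΓ'incons : ¬ Consistent (S.Th Γ') := fun hc =>
      hincons (S.consistent_mono hW hΓ'Γ.subset hΓc hc)
    have hins : insert C Γ' = Δ' := Finset.insert_erase hCΔ'
    exact hmin Γ' hΓ'Γ ⟨hCc, hΓ'sub, hΓ'incons, hins ▸ hΔ'cons⟩
  · -- Δ' ⊆ Γ, so Th(Γ) would be consistent
    have hΔ'Γ : Δ' ⊆ Γ := by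
      intro x hx
      rcases Finset.mem_insert.1 (hΔ'.1 hx) with rfl | h'
      · exact absurd hx hCΔ'
      · exact h'
    exact hincons (S.consistent_mono hW hΔ'Γ hΓc hΔ'cons)
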